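/- If in Algorithm AddEdge an edge (u,v) is added, i.e., u ∈ para(v), l(u)+r(v) ≤ len(G) in G, and el(u)+er(v) > len(G_r) in the residue graph G_r, then after adding the edge: the longest path length of G is unchanged and the longest path length of G_r strictly increases. -/

import Mathlib

def IsPathFromTo {V : Type*} (E : V → V → Prop) (a b : V) (p : List V) : Prop :=
  p.Chain' E ∧ p.head? = some a ∧ p.getLast? = some b

def plen {V : Type*} (c : V → ℝ) (p : List V) : ℝ := (p.map c).sum

lemma plen_append {V : Type*} (c : V → ℝ) (p q : List V) :
    plen c (p ++ q) = plen c p + plen c q := by simp [plen]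

lemma plen_cons {V : Type*} (c : V → ℝ) (x : V) (p : List V) :
    plen c (x :: p) = c x + plen c p := by simp [plen]

lemma plen_replicate {V : Type*} (c : V → ℝ) (k : ℕ) (x : V) :
    plen c (List.replicate k x) = k * c x := by
  simp [plen, List.map_replicate, List.sum_replicate, nsmul_eq_mul]

lemma head_trans {V : Type*} {R : V → V → Prop} :
    ∀ {p : List V} {a b : V}, p.Chain' R → p.head? = some a → b ∈ p →
      b = a ∨ Relation.TransGen R a b
  | [], a, b, _, ha, hb => by simp at hb
  | x :: t, a, b, hch, ha, hb => by
    simp only [List.head?_cons, Option.some.injEq] at ha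
    subst ha
    rcases List.mem_cons.mp hb with h | h
    · exact Or.inl h
    · right
      rcases List.isChain_cons.mp hch with ⟨hstep, ht⟩
      cases t with
      | nil => simp at h
      | cons y t' =>
        have hxy : R x y := hstep y rfl
        rcases head_trans ht rfl h with rfl | htr
        · exact Relation.TransGen.single hxy
        · exact Relation.TransGen.head hxy htr

lemma chain_of_mem {V : Type*} {R S : V → V → Prop} :
    ∀ {p : List V}, p.Chain' R → (∀ x ∈ p, ∀ y ∈ p, R x y → S x y) → p.Chain' S
  | [], _, _ => List.isChain_nil
  | [x], _, _ => List.isChain_singleton x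
  | x :: y :: t, hch, h => by
    rcases List.isChain_cons_cons.mp hch with ⟨hxy, ht⟩
    exact List.isChain_cons_cons.mpr ⟨h x (by simp) y (by simp) hxy,
      chain_of_mem ht (fun a ha b hb hr => h a (by simp [ha]) b (by simp [hb]) hr)⟩

lemma path_append {V : Type*} {R : V → V → Prop} {a u v b : V} {p q : List V}
    (hp : IsPathFromTo R a u p) (hq : IsPathFromTo R v b q) (huv : R u v) :
    IsPathFromTo R a b (p ++ q) := by
  obtain ⟨hcp, hhp, hlp⟩ := hp
  obtain ⟨hcq, hhq, hlq⟩ := hq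
  refine ⟨List.isChain_append.mpr ⟨hcp, hcq, ?_⟩, ?_, ?_⟩
  · intro x hx y hy
    rw [hlp] at hx; rw [hhq] at hy
    simp only [Option.mem_def, Option.some.injEq] at hx hy
    subst hx; subst hy; exact huv
  · rw [List.head?_append, hhp]; rfl
  · rw [List.getLast?_append, hlq]; rfl

lemma split_first {V : Type*} (E : V → V → Prop) (u v : V) :
    ∀ {p : List V}, p.Chain' (fun a b => E a b ∨ (a = u ∧ b = v)) →
      p.Chain' E ∨ ∃ p1 p2, p = p1 ++ p2 ∧ p1.Chain' E ∧
        p2.Chain' (fun a b => E a b ∨ (a = u ∧ b = v)) ∧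
        p1.getLast? = some u ∧ p2.head? = some v
  | [], _ => Or.inl List.isChain_nil
  | [x], _ => Or.inl (List.isChain_singleton x)
  | x :: y :: t, hch => by
    rcases List.isChain_cons_cons.mp hch with ⟨hxy, ht⟩
    by_cases huv : x = u ∧ y = v
    · exact Or.inr ⟨[x], y :: t, rfl, List.isChain_singleton x, ht, by simp [huv.1],
        by simp [huv.2]⟩
    · have hxyE : E x y := hxy.resolve_right huv
      rcases split_first E u v ht with hE | ⟨p1, p2, heq, h1, h2, hl, hh⟩
      · exact Or.inl (List.isChain_cons_cons.mpr ⟨hxyE, hE⟩)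
      · cases p1 with
        | nil => simp at hl
        | cons w t' =>
          rw [List.cons_append] at heq
          injection heq with e1 e2
          subst e1; subst e2
          exact Or.inr ⟨x :: y :: t', p2, by simp, List.isChain_cons_cons.mpr ⟨hxyE, h1⟩, h2,
            by rw [List.getLast?_cons_cons]; exact hl, hh⟩

lemma transgen_char {V : Type*} {E : V → V → Prop} {u v : V}
    (hvu : ¬ Relation.TransGen E v u) (hne : v ≠ u) {a b : V}
    (h : Relation.TransGen (fun a b => E a b ∨ (a = u ∧ b = v)) a b) :
    Relation.TransGen E a b ∨ (Relation.ReflTransGen E a u ∧ Relation.ReflTransGen E v b) := by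
  induction h with
  | single hstep =>
    rcases hstep with h | ⟨rfl, rfl⟩
    · exact Or.inl (Relation.TransGen.single h)
    · exact Or.inr ⟨Relation.ReflTransGen.refl, Relation.ReflTransGen.refl⟩
  | tail _ hstep ih =>
    rcases hstep with h | ⟨rfl, rfl⟩
    · rcases ih with h1 | ⟨h1, h2⟩
      · exact Or.inl (h1.tail h)
      · exact Or.inr ⟨h1, h2.tail h⟩
    · rcases ih with h1 | ⟨h1, h2⟩
      · exact Or.inr ⟨h1.to_reflTransGen, Relation.ReflTransGen.refl⟩
      · rcases Relation.reflTransGen_iff_eq_or_transGen.mp h2 with h3 | h3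
        · exact absurd h3.symm hne
        · exact absurd h3 hvu

lemma chain_replicate {V : Type*} {R : V → V → Prop} {x : V} (hx : R x x) :
    ∀ n, (List.replicate n x).Chain' R := by
  intro n
  induction n with
  | zero => exact List.isChain_nil
  | succ k ih =>
    rw [List.replicate_succ]
    refine List.isChain_cons.mpr ⟨fun y hy => ?_, ih⟩
    cases k with
    | zero => simp at hy
    | succ m =>
      rw [List.replicate_succ] at hy
      simp only [List.head?_cons, Option.mem_def, Option.some.injEq] at hy
      subst hy; exact hx

lemma getLast?_replicate' {V : Type*} (x : V) (k : ℕ) :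
    (List.replicate (k + 1) x).getLast? = some x := by
  induction k with
  | zero => rfl
  | succ m ih =>
    rw [List.replicate_succ, List.replicate_succ, List.getLast?_cons_cons,
      ← List.replicate_succ]
    exact ih

/-- If `AddEdge` adds the edge `(u,v)` — i.e. `u ∈ para(v)`,
`l(u) + r(v) ≤ len(G)` in `G`, and `el(u) + er(v) > len(G_r)` in the residue
graph `G_r` (same graph, with weights `cr`, some zeroed) — then the longest path
length of `G` is unchanged while that of `G_r` strictly increases. -/
theorem stmt17 {V : Type*} [Fintype V] [DecidableEq V]
    (E : V → V → Prop) (c cr : V → ℝ) (src snk u v : V)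
    (hacyc : ∀ w, ¬ Relation.TransGen E w w)
    (hc : ∀ w, 0 ≤ c w)
    (hcr : ∀ w, cr w = c w ∨ cr w = 0)
    (hsrc : ∀ w, ¬ E w src) (hsnk : ∀ w, ¬ E snk w)
    (hpar : ¬ Relation.TransGen E u v ∧ ¬ Relation.TransGen E v u)
    (lu rv elu erv lenG lenG' lenGr lenGr' : ℝ)
    (hlu : IsGreatest {x | ∃ p, IsPathFromTo E src u p ∧ plen c p = x} lu)
    (hrv : IsGreatest {x | ∃ p, IsPathFromTo E v snk p ∧ plen c p = x} rv)
    (helu : IsGreatest {x | ∃ p, IsPathFromTo E src u p ∧ plen cr p = x} elu)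
    (herv : IsGreatest {x | ∃ p, IsPathFromTo E v snk p ∧ plen cr p = x} erv)
    (hlen : IsGreatest {x | ∃ p, IsPathFromTo E src snk p ∧ plen c p = x} lenG)
    (hlenr : IsGreatest {x | ∃ p, IsPathFromTo E src snk p ∧ plen cr p = x} lenGr)
    (hlen' : IsGreatest {x | ∃ p,
        IsPathFromTo (fun a b => E a b ∨ (a = u ∧ b = v)) src snk p ∧ plen c p = x} lenG')
    (hlenr' : IsGreatest {x | ∃ p,
        IsPathFromTo (fun a b => E a b ∨ (a = u ∧ b = v)) src snk p ∧ plen cr p = x} lenGr')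
    (hle : lu + rv ≤ lenG)
    (hgt : elu + erv > lenGr) :
    lenG' = lenG ∧ lenGr' > lenGr := by
  classical
  have hmono : ∀ q : List V, q.Chain' E →
      q.Chain' (fun a b => E a b ∨ (a = u ∧ b = v)) :=
    fun q hq => hq.imp (fun _ _ h => Or.inl h)
  obtain ⟨p1, hp1, hp1len⟩ := helu.1
  obtain ⟨p2, hp2, hp2len⟩ := herv.1
  have hnew : (fun a b => E a b ∨ (a = u ∧ b = v)) u v := Or.inr ⟨rfl, rfl⟩
  have hP : IsPathFromTo (fun a b => E a b ∨ (a = u ∧ b = v)) src snk (p1 ++ p2) :=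
    path_append ⟨hmono _ hp1.1, hp1.2.1, hp1.2.2⟩ ⟨hmono _ hp2.1, hp2.2.1, hp2.2.2⟩ hnew
  have h2 : lenGr' > lenGr := by
    have hub : plen cr (p1 ++ p2) ≤ lenGr' := hlenr'.2 ⟨p1 ++ p2, hP, rfl⟩
    rw [plen_append, hp1len, hp2len] at hub
    linarith
  refine ⟨?_, h2⟩
  -- first, rule out u = v
  have hne : u ≠ v := by
    rintro rfl
    by_cases h0 : cr u = 0
    · -- combine p1 and p2 at u into an E-path, contradicting hgt
      obtain ⟨t, rfl⟩ : ∃ t, p2 = u :: t := by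
        cases p2 with
        | nil => simp [IsPathFromTo] at hp2
        | cons w t =>
          have hw : w = u := by have := hp2.2.1; simpa using this
          exact ⟨t, by rw [hw]⟩
      cases t with
      | nil =>
        have hsnku : u = snk := by have := hp2.2.2; simpa using this
        have hpath : IsPathFromTo E src snk p1 :=
          ⟨hp1.1, hp1.2.1, by rw [hp1.2.2, hsnku]⟩
        have h1 : elu ≤ lenGr := hlenr.2 ⟨p1, hpath, hp1len⟩
        have h2' : erv = cr u := by rw [← hp2len]; simp [plen]
        rw [h2', h0] at hgt
        linarith
      | cons y t' =>
        rcases List.isChain_cons_cons.mp hp2.1 with ⟨huy, hty⟩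
        have hpath : IsPathFromTo E src snk (p1 ++ (y :: t')) := by
          refine ⟨List.isChain_append.mpr ⟨hp1.1, hty, ?_⟩, ?_, ?_⟩
          · intro a ha b hb
            rw [hp1.2.2] at ha
            simp only [Option.mem_def, Option.some.injEq, List.head?_cons] at ha hb
            subst ha; subst hb; exact huy
          · rw [List.head?_append, hp1.2.1]; rfl
          · rw [List.getLast?_append]
            have := hp2.2.2
            rw [List.getLast?_cons_cons] at this
            rw [this]; rfl
        have hub : plen cr (p1 ++ (y :: t')) ≤ lenGr := hlenr.2 ⟨_, hpath, rfl⟩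
        have hev : erv = cr u + plen cr (y :: t') := by rw [← hp2len, plen_cons]
        rw [plen_append, hp1len] at hub
        rw [h0] at hev
        linarith
    · -- cr u > 0 : pump arbitrarily long paths through the self-loop
      have hpos : 0 < cr u := by
        rcases hcr u with h | h
        · rw [h]; rcases lt_or_eq_of_le (hc u) with h' | h'
          · exact h'
          · exact absurd (h.trans h'.symm) h0
        · exact absurd h h0
      obtain ⟨k, hk⟩ := exists_nat_gt ((lenGr' - elu - erv) / cr u)
      have hrep : IsPathFromTo (fun a b => E a b ∨ (a = u ∧ b = u)) u u
          (List.replicate (k + 1) u) :=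
        ⟨chain_replicate (R := fun a b => E a b ∨ (a = u ∧ b = u)) hnew (k + 1), by rw [List.replicate_succ]; rfl,
          getLast?_replicate' u k⟩
      have hbig : IsPathFromTo (fun a b => E a b ∨ (a = u ∧ b = u)) src snk
          (p1 ++ (List.replicate (k + 1) u ++ p2)) :=
        path_append ⟨hmono _ hp1.1, hp1.2.1, hp1.2.2⟩
          (path_append hrep ⟨hmono _ hp2.1, hp2.2.1, hp2.2.2⟩ hnew) hnew
      have hub : plen cr (p1 ++ (List.replicate (k + 1) u ++ p2)) ≤ lenGr' :=
        hlenr'.2 ⟨_, hbig, rfl⟩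
      rw [plen_append, plen_append, plen_replicate, hp1len, hp2len] at hub
      have hk' : lenGr' - elu - erv < k * cr u := by
        have := (div_lt_iff₀ hpos).mp hk
        linarith
      push_cast at hub
      nlinarith [hpos]
  -- now u ≠ v : no path from v to u in the new graph
  have hvu' : ¬ Relation.TransGen (fun a b => E a b ∨ (a = u ∧ b = v)) v u := by
    intro h
    rcases transgen_char hpar.2 (Ne.symm hne) h with h1 | ⟨h1, _⟩
    · exact hpar.2 h1
    · rcases Relation.reflTransGen_iff_eq_or_transGen.mp h1 with h3 | h3
      · exact hne h3
      · exact hpar.2 h3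
  have hbound : ∀ p, IsPathFromTo (fun a b => E a b ∨ (a = u ∧ b = v)) src snk p →
      plen c p ≤ lenG := by
    rintro p ⟨hch, hhd, hlast⟩
    rcases split_first E u v hch with hE | ⟨q1, q2, rfl, h1, hq2, hl, hh⟩
    · exact hlen.2 ⟨p, ⟨hE, hhd, hlast⟩, rfl⟩
    · have hq1ne : q1 ≠ [] := fun h => by simp [h] at hl
      have hq2ne : q2 ≠ [] := fun h => by simp [h] at hh
      have hh1 : q1.head? = some src := by
        obtain ⟨a, t, rfl⟩ := List.exists_cons_of_ne_nil hq1ne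
        rw [List.cons_append] at hhd
        simpa using hhd
      have hl2 : q2.getLast? = some snk := by
        rw [List.getLast?_append] at hlast
        cases hg : q2.getLast? with
        | none => exact absurd (List.getLast?_eq_none_iff.mp hg) hq2ne
        | some z => rw [hg] at hlast; simpa using hlast
      have hq2E : q2.Chain' E := by
        refine chain_of_mem hq2 (fun x hx y hy hxy => ?_)
        rcases hxy with h | ⟨rfl, rfl⟩
        · exact h
        · exfalso
          rcases head_trans hq2 hh hx with h' | h'
          · exact hne h'
          · exact hvu' h'
      have b1 : plen c q1 ≤ lu := hlu.2 ⟨q1, ⟨h1, hh1, hl⟩, rfl⟩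
      have b2 : plen c q2 ≤ rv := hrv.2 ⟨q2, ⟨hq2E, hh, hl2⟩, rfl⟩
      rw [plen_append]
      linarith
  obtain ⟨p', hp', hp'len⟩ := hlen'.1
  have hle1 : lenG' ≤ lenG := hp'len ▸ hbound p' hp'
  obtain ⟨p0, hp0, hp0len⟩ := hlen.1
  have hle2 : lenG ≤ lenG' := hlen'.2 ⟨p0, ⟨hmono _ hp0.1, hp0.2.1, hp0.2.2⟩, hp0len⟩
  linarith
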